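/- Suppose for each iteration t and every s ∈ [0,1] the expected dual increase satisfies E[D(α^{(t+1)})] − D(α^{(t)}) ≥ b((s/n)G(α^{(t)}) − (s/n)² β G/(2λ)), where G(α^{(t)}) ≥ 0 is the duality gap. Then choosing s = n/(b(T−T₀)) (assuming T − T₀ ≥ n/b so s ≤ 1) and averaging t from T₀ to T−1: E[(1/(T−T₀))∑_{t=T₀}^{T−1} G(α^{(t)})] ≤ (D(α*) − E[D(α^{(T₀)})]) + Gβ/(2b(T−T₀)λ). -/

import Mathlib

open Finset

/-- If for each iteration `t` and every `s ∈ [0,1]` the dual increase satisfies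
`d(t+1) - d(t) ≥ b((s/n) g(t) - (s/n)² βG/(2λ))`, with `d(t) ≤ d*` and
gaps `g(t) ≥ 0`, then choosing `s = n/(b(T-T₀))` (with `T - T₀ ≥ n/b`) and
averaging from `T₀` to `T-1`:
`(1/(T-T₀)) ∑ g(t) ≤ (d* - d(T₀)) + Gβ/(2b(T-T₀)λ)`. -/
theorem stmt19 (b n β G lam dstar : ℝ) (hb : 0 < b) (hn : 0 < n) (hβ : 0 < β)
    (hG : 0 < G) (hlam : 0 < lam)
    (T0 T : ℕ) (hT : T0 < T) (hTn : n / b ≤ (T : ℝ) - (T0 : ℝ))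
    (d g : ℕ → ℝ) (hg : ∀ t, 0 ≤ g t) (hd : ∀ t, d t ≤ dstar)
    (hrec : ∀ t, ∀ s : ℝ, 0 ≤ s → s ≤ 1 →
        d (t + 1) - d t ≥ b * ((s / n) * g t - (s / n) ^ 2 * β * G / (2 * lam))) :
    (1 / ((T : ℝ) - (T0 : ℝ))) * ∑ t ∈ Finset.Ico T0 T, g t
      ≤ (dstar - d T0) + G * β / (2 * b * ((T : ℝ) - (T0 : ℝ)) * lam) := by
  set K : ℝ := (T : ℝ) - (T0 : ℝ) with hKdef
  have hK : 0 < K := by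
    have : (T0 : ℝ) < (T : ℝ) := by exact_mod_cast hT
    linarith
  set s : ℝ := n / (b * K) with hs
  have hbK : 0 < b * K := mul_pos hb hK
  have hs0 : 0 ≤ s := le_of_lt (div_pos hn hbK)
  have hs1 : s ≤ 1 := by
    rw [hs, div_le_one hbK]
    calc n = (n / b) * b := by field_simp
    _ ≤ K * b := by nlinarith
    _ = b * K := mul_comm _ _
  -- pointwise bound
  have hpt : ∀ t, g t / K - β * G / (2 * b * K ^ 2 * lam) ≤ d (t + 1) - d t := by
    intro t
    have h := hrec t s hs0 hs1
    have hsn : s / n = 1 / (b * K) := by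
      rw [hs]; field_simp
    rw [hsn] at h
    have heq : b * ((1 / (b * K)) * g t - (1 / (b * K)) ^ 2 * β * G / (2 * lam))
        = g t / K - β * G / (2 * b * K ^ 2 * lam) := by
      field_simp
    rw [heq] at h
    exact h
  have hsum : ∑ t ∈ Finset.Ico T0 T, (g t / K - β * G / (2 * b * K ^ 2 * lam))
      ≤ d T - d T0 := by
    have htel : ∑ t ∈ Finset.Ico T0 T, (d (t + 1) - d t) = d T - d T0 := by
      rw [Finset.sum_Ico_eq_sub _ hT.le, Finset.sum_range_sub, Finset.sum_range_sub]
      ring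
    calc ∑ t ∈ Finset.Ico T0 T, (g t / K - β * G / (2 * b * K ^ 2 * lam))
        ≤ ∑ t ∈ Finset.Ico T0 T, (d (t + 1) - d t) :=
          Finset.sum_le_sum fun t _ => hpt t
      _ = d T - d T0 := htel
  rw [Finset.sum_sub_distrib, Finset.sum_const, Nat.card_Ico] at hsum
  have hcard : ((T - T0 : ℕ) : ℝ) = K := by
    rw [hKdef]
    push_cast [Nat.cast_sub hT.le]
    ring
  rw [nsmul_eq_mul, hcard] at hsum
  have hdiv : ∑ t ∈ Finset.Ico T0 T, g t / K = (1 / K) * ∑ t ∈ Finset.Ico T0 T, g t := by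
    rw [one_div, mul_comm, ← Finset.sum_div, div_eq_mul_inv]
  rw [hdiv] at hsum
  have hconst : K * (β * G / (2 * b * K ^ 2 * lam)) = G * β / (2 * b * K * lam) := by
    field_simp
  rw [hconst] at hsum
  have hdT : d T ≤ dstar := hd T
  linarith
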